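/- Suppose m ≥ 3 and λ_i = 1/m for every i ∈ I, and let Q_1,…,Q_m : X → X be firmly nonexpansive. Then the composition J∘R is (2m/(3m−2))-averaged: there exists a nonexpansive map N : 𝐗 → 𝐗 such that J∘R = (1−α)Id + αN with α = 2m/(3m−2). -/

import Mathlib

open Finset RealInnerProductSpace

set_option maxHeartbeats 1600000 in
/-- For `m ≥ 3`, equal weights `λ i = 1/m`, and firmly nonexpansive
`Q₁, …, Q_m`, the composition `J ∘ R` is `(2m/(3m−2))`-averaged: there is a
nonexpansive `N` on `X^m` with `J ∘ R = (1−α)Id + αN`, `α = 2m/(3m−2)`. -/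
theorem JR_averaged
    {X : Type*} [NormedAddCommGroup X] [InnerProductSpace ℝ X]
    (m : ℕ) (hm : 3 ≤ m)
    (Q : Fin m → X → X)
    (hQ : ∀ i x y, ‖Q i x - Q i y‖ ^ 2 + ‖(x - Q i x) - (y - Q i y)‖ ^ 2 ≤ ‖x - y‖ ^ 2)
    (R J : PiLp 2 (fun _ : Fin m => X) → PiLp 2 (fun _ : Fin m => X))
    (hR : ∀ x i, R x i = ((m : ℝ) - 1)⁻¹ • ∑ j ∈ Finset.univ.erase i, x j)
    (hJ : ∀ x i, J x i = Q i (x i))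
    (α : ℝ) (hα : α = 2 * m / (3 * m - 2)) :
    ∃ N : PiLp 2 (fun _ : Fin m => X) → PiLp 2 (fun _ : Fin m => X),
      (∀ x y, ‖N x - N y‖ ≤ ‖x - y‖) ∧ (∀ x, J (R x) = (1 - α) • x + α • N x) := by
  have hm3 : (3:ℝ) ≤ (m:ℝ) := by exact_mod_cast hm
  have hm0 : (0:ℝ) < m := by linarith
  have hm0' : (m:ℝ) ≠ 0 := ne_of_gt hm0
  have hm1 : ((m:ℝ) - 1) ≠ 0 := by intro h; linarith [h]
  have hden : (0:ℝ) < 3*(m:ℝ) - 2 := by linarith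
  have hα0 : 0 < α := by rw [hα]; positivity
  have hαne : α ≠ 0 := ne_of_gt hα0
  refine ⟨fun z => (1 - α⁻¹) • z + α⁻¹ • J (R z), ?_, ?_⟩
  · intro x y
    -- abbreviations
    set uu : Fin m → X := fun i => x i - y i with huu
    set s : X := ∑ i, uu i with hs
    have hA0 : (0:ℝ) ≤ ∑ i, ‖uu i‖^2 := Finset.sum_nonneg fun i _ => sq_nonneg _
    -- components of R x - R y
    have hri : ∀ i, (R x - R y) i = ((m:ℝ) - 1)⁻¹ • (s - uu i) := by
      intro i
      have h1 : (R x - R y) i = R x i - R y i := rfl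
      rw [h1, hR, hR, ← smul_sub, ← Finset.sum_sub_distrib]
      congr 1
      show (∑ j ∈ Finset.univ.erase i, uu j) = s - uu i
      rw [hs]
      exact eq_sub_of_add_eq' (Finset.add_sum_erase Finset.univ uu (Finset.mem_univ i))
    -- components of J (R x) - J (R y)
    have hvi : ∀ i, (J (R x) - J (R y)) i = Q i (R x i) - Q i (R y i) := by
      intro i
      have h1 : (J (R x) - J (R y)) i = J (R x) i - J (R y) i := rfl
      rw [h1, hJ, hJ]
    -- step 1 : firm nonexpansiveness of J summed up
    have h1 : ‖J (R x) - J (R y)‖^2 + ‖(R x - R y) - (J (R x) - J (R y))‖^2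
        ≤ ‖R x - R y‖^2 := by
      rw [PiLp.norm_sq_eq_of_L2, PiLp.norm_sq_eq_of_L2, PiLp.norm_sq_eq_of_L2,
        ← Finset.sum_add_distrib]
      refine Finset.sum_le_sum fun i _ => ?_
      have hci : ((R x - R y) - (J (R x) - J (R y))) i
          = (R x i - Q i (R x i)) - (R y i - Q i (R y i)) := by
        have h0 : ((R x - R y) - (J (R x) - J (R y))) i
            = (R x i - R y i) - (J (R x) i - J (R y) i) := rfl
        rw [h0, hJ, hJ, sub_sub_sub_comm]
      rw [hvi i, hci]
      exact hQ i (R x i) (R y i)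
    -- norms squared computations
    have hU : ‖x - y‖^2 = ∑ i, ‖uu i‖^2 := by
      rw [PiLp.norm_sq_eq_of_L2]; rfl
    have hsum_inner : (∑ i, (inner ℝ (s) (uu i) : ℝ)) = ‖s‖^2 := by
      rw [← inner_sum, ← hs, real_inner_self_eq_norm_sq]
    have hsum_inner' : (∑ i, (inner ℝ (uu i) (s) : ℝ)) = ‖s‖^2 := by
      rw [← sum_inner, ← hs, real_inner_self_eq_norm_sq]
    have hR2 : ‖R x - R y‖^2
        = (((m:ℝ) - 1)⁻¹)^2 * (((m:ℝ) - 2) * ‖s‖^2 + ∑ i, ‖uu i‖^2) := by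
      rw [PiLp.norm_sq_eq_of_L2]
      have hterm : ∀ i : Fin m, ‖(R x - R y) i‖^2
          = (((m:ℝ) - 1)⁻¹)^2 * (‖s‖^2 - 2 * (inner ℝ (s) (uu i) : ℝ) + ‖uu i‖^2) := by
        intro i
        rw [hri i, norm_smul, mul_pow, norm_sub_sq_real, Real.norm_eq_abs, sq_abs]
      rw [Finset.sum_congr rfl fun i _ => hterm i, ← Finset.mul_sum]
      have hsplit : (∑ i, (‖s‖^2 - 2 * (inner ℝ (s) (uu i) : ℝ) + ‖uu i‖^2))
          = (m:ℝ)*‖s‖^2 - 2*(∑ i, (inner ℝ (s) (uu i) : ℝ)) + ∑ i, ‖uu i‖^2 := by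
        rw [Finset.sum_add_distrib, Finset.sum_sub_distrib, ← Finset.mul_sum,
          Finset.sum_const, Finset.card_univ, Fintype.card_fin, nsmul_eq_mul]
      rw [hsplit, hsum_inner]
      ring
    have hURi : ∀ i, ((x - y) - (R x - R y)) i
        = ((m:ℝ) - 1)⁻¹ • ((m:ℝ) • uu i - s) := by
      intro i
      have h0 : ((x - y) - (R x - R y)) i = uu i - (R x - R y) i := rfl
      rw [h0, hri i]
      match_scalars <;> field_simp <;> ring
    have hUR2 : ‖(x - y) - (R x - R y)‖^2
        = (((m:ℝ) - 1)⁻¹)^2 * ((m:ℝ)^2 * (∑ i, ‖uu i‖^2) - (m:ℝ) * ‖s‖^2) := by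
      rw [PiLp.norm_sq_eq_of_L2]
      have hterm : ∀ i : Fin m, ‖((x - y) - (R x - R y)) i‖^2
          = (((m:ℝ) - 1)⁻¹)^2
            * ((m:ℝ)^2 * ‖uu i‖^2 - 2 * (m:ℝ) * (inner ℝ (uu i) (s) : ℝ) + ‖s‖^2) := by
        intro i
        rw [hURi i, norm_smul, mul_pow, norm_sub_sq_real, Real.norm_eq_abs, sq_abs,
          norm_smul, Real.norm_eq_abs, real_inner_smul_left, mul_pow, sq_abs]
        ring
      rw [Finset.sum_congr rfl fun i _ => hterm i, ← Finset.mul_sum]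
      have hsplit : (∑ i, ((m:ℝ)^2 * ‖uu i‖^2 - 2 * (m:ℝ) * (inner ℝ (uu i) (s) : ℝ) + ‖s‖^2))
          = (m:ℝ)^2 * (∑ i, ‖uu i‖^2) - 2*(m:ℝ)*(∑ i, (inner ℝ (uu i) (s) : ℝ))
            + (m:ℝ)*‖s‖^2 := by
        rw [Finset.sum_add_distrib, Finset.sum_sub_distrib, ← Finset.mul_sum,
          ← Finset.mul_sum, Finset.sum_const, Finset.card_univ, Fintype.card_fin,
          nsmul_eq_mul]
      rw [hsplit, hsum_inner']
      ring
    -- step 2 : the exact identity for R (multiplied through by m)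
    have h2' : (m:ℝ) * ‖R x - R y‖^2 + ((m:ℝ) - 2) * ‖(x - y) - (R x - R y)‖^2
        = (m:ℝ) * ‖x - y‖^2 := by
      rw [hR2, hUR2, hU]
      field_simp
      ring
    -- step 3 : triangle-type inequality
    have h3 : ‖(x - y) - (J (R x) - J (R y))‖^2
        ≤ 2*‖(x - y) - (R x - R y)‖^2 + 2*‖(R x - R y) - (J (R x) - J (R y))‖^2 := by
      have ht : ‖(x - y) - (J (R x) - J (R y))‖
          ≤ ‖(x - y) - (R x - R y)‖ + ‖(R x - R y) - (J (R x) - J (R y))‖ := by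
        have he : (x - y) - (J (R x) - J (R y))
            = ((x - y) - (R x - R y)) + ((R x - R y) - (J (R x) - J (R y))) := by abel
        rw [he]; exact norm_add_le _ _
      nlinarith [norm_nonneg ((x - y) - (J (R x) - J (R y))),
        norm_nonneg ((x - y) - (R x - R y)),
        norm_nonneg ((R x - R y) - (J (R x) - J (R y))),
        sq_nonneg (‖(x - y) - (R x - R y)‖ - ‖(R x - R y) - (J (R x) - J (R y))‖)]
    -- step 4 : the key averagedness inequality (multiplied by 2m)
    have key' : 2*(m:ℝ)*‖J (R x) - J (R y)‖^2
        + ((m:ℝ) - 2)*‖(x - y) - (J (R x) - J (R y))‖^2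
        ≤ 2*(m:ℝ)*‖x - y‖^2 := by
      have e1 := mul_le_mul_of_nonneg_left h1 (by linarith : (0:ℝ) ≤ 2*(m:ℝ))
      have e2 := mul_le_mul_of_nonneg_left h3 (by linarith : (0:ℝ) ≤ (m:ℝ) - 2)
      nlinarith [e1, e2, h2', sq_nonneg ‖(R x - R y) - (J (R x) - J (R y))‖]
    -- step 5 : nonexpansiveness of N
    have hNsub : ((1 - α⁻¹) • x + α⁻¹ • J (R x)) - ((1 - α⁻¹) • y + α⁻¹ • J (R y))
        = (x - y) + α⁻¹ • ((J (R x) - J (R y)) - (x - y)) := by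
      match_scalars <;> ring
    have hvsum : (x - y) + ((J (R x) - J (R y)) - (x - y)) = J (R x) - J (R y) := by
      abel
    have hcross : 2 * (inner ℝ (x - y) ((J (R x) - J (R y)) - (x - y)) : ℝ)
        = ‖J (R x) - J (R y)‖^2 - ‖x - y‖^2 - ‖(J (R x) - J (R y)) - (x - y)‖^2 := by
      have := norm_add_sq_real (x - y) ((J (R x) - J (R y)) - (x - y))
      rw [hvsum] at this
      linarith
    have hwrev : ‖(J (R x) - J (R y)) - (x - y)‖ = ‖(x - y) - (J (R x) - J (R y))‖ :=
      norm_sub_rev _ _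
    have hinv : α⁻¹ = (3*(m:ℝ) - 2)/(2*(m:ℝ)) := by
      rw [hα, inv_div]
    have hβ : ‖J (R x) - J (R y)‖^2
        + (α⁻¹ - 1) * ‖(J (R x) - J (R y)) - (x - y)‖^2 ≤ ‖x - y‖^2 := by
      have hdiff : ‖J (R x) - J (R y)‖^2
          + (α⁻¹ - 1) * ‖(J (R x) - J (R y)) - (x - y)‖^2 - ‖x - y‖^2
          = (2*(m:ℝ)*‖J (R x) - J (R y)‖^2
            + ((m:ℝ) - 2)*‖(x - y) - (J (R x) - J (R y))‖^2
            - 2*(m:ℝ)*‖x - y‖^2) / (2*(m:ℝ)) := by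
        rw [hinv, hwrev]
        field_simp
        ring
      have h0 : (2*(m:ℝ)*‖J (R x) - J (R y)‖^2
          + ((m:ℝ) - 2)*‖(x - y) - (J (R x) - J (R y))‖^2
          - 2*(m:ℝ)*‖x - y‖^2) ≤ 0 := by linarith [key']
      have h4 := div_nonpos_of_nonpos_of_nonneg h0 (by linarith : (0:ℝ) ≤ 2*(m:ℝ))
      rw [← hdiff] at h4
      linarith
    have hc0 : (0:ℝ) < α⁻¹ := inv_pos.mpr hα0
    have hexp : ‖(x - y) + α⁻¹ • ((J (R x) - J (R y)) - (x - y))‖^2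
        = ‖x - y‖^2 + α⁻¹ * (2 * (inner ℝ (x - y) ((J (R x) - J (R y)) - (x - y)) : ℝ))
          + (α⁻¹)^2 * ‖(J (R x) - J (R y)) - (x - y)‖^2 := by
      rw [norm_add_sq_real, real_inner_smul_right, norm_smul, Real.norm_eq_abs,
        abs_of_pos hc0]
      ring
    have hsq : ‖(x - y) + α⁻¹ • ((J (R x) - J (R y)) - (x - y))‖^2 ≤ ‖x - y‖^2 := by
      rw [hexp, hcross]
      have hscaled := mul_le_mul_of_nonneg_left hβ hc0.le
      nlinarith [hscaled]
    show ‖((1 - α⁻¹) • x + α⁻¹ • J (R x)) - ((1 - α⁻¹) • y + α⁻¹ • J (R y))‖ ≤ ‖x - y‖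
    rw [hNsub]
    nlinarith [hsq, norm_nonneg ((x - y) + α⁻¹ • ((J (R x) - J (R y)) - (x - y))),
      norm_nonneg (x - y)]
  · intro x
    show J (R x) = (1 - α) • x + α • ((1 - α⁻¹) • x + α⁻¹ • J (R x))
    match_scalars <;> field_simp <;> ring
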